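/- Let π be a finite non-abelian nilpotent group, let A be a commutative group, and let Q be any group. Then there is no injective group homomorphism f : π → A × Q such that the composite pr_Q ∘ f : π → Q (with pr_Q the projection onto the second factor) is surjective and has kernel equal to the center Z(π) of π. -/

import Mathlib

/-- A nontrivial nilpotent group has nontrivial center. -/
lemma center_ne_bot_of_nilpotent (G : Type*) [Group G] [Nontrivial G]
    (h : Group.IsNilpotent G) : Subgroup.center G ≠ ⊥ := by
  intro hc
  have key : ∀ n, Subgroup.upperCentralSeries G n = ⊥ := by
    intro n
    induction n with
    | zero => exact Subgroup.upperCentralSeries_zero G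
    | succ n ih =>
      rw [eq_bot_iff]
      intro x hx
      rw [Subgroup.mem_upperCentralSeries_succ_iff] at hx
      have hxc : x ∈ Subgroup.center G := by
        rw [Subgroup.mem_center_iff]
        intro y
        have := hx y
        rw [ih, Subgroup.mem_bot] at this
        have h1 : x * y * x⁻¹ = y := by simpa [commutatorElement_def] using congrArg (· * y) this
        calc y * x = (x * y * x⁻¹) * x := by rw [h1]
          _ = x * y := by group
      rwa [hc, Subgroup.mem_bot] at hxc
  obtain ⟨n, hn⟩ := h
  rw [key n] at hn
  obtain ⟨a, b, hab⟩ := exists_pair_ne G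
  exact hab (by
    have ha : a ∈ (⊥ : Subgroup G) := hn ▸ Subgroup.mem_top a
    have hb : b ∈ (⊥ : Subgroup G) := hn ▸ Subgroup.mem_top b
    rw [Subgroup.mem_bot] at ha hb
    rw [ha, hb])

/-- Let `π` be a finite non-abelian nilpotent group, `A` a commutative
group, `Q` any group.  There is no injective homomorphism `f : π → A × Q` such that the
composite `pr_Q ∘ f : π → Q` is surjective with kernel the center `Z(π)`. -/
theorem no_embedding_into_product (π A Q : Type*) [Group π] [Finite π]
    [CommGroup A] [Group Q]
    (hπ : ∃ a b : π, a * b ≠ b * a)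
    (hnil : Group.IsNilpotent π) :
    ¬ ∃ f : π →* A × Q, Function.Injective f ∧
      Function.Surjective ((MonoidHom.snd A Q).comp f) ∧
      ((MonoidHom.snd A Q).comp f).ker = Subgroup.center π := by
  rintro ⟨f, hinj, hsurj, hker⟩
  set g := (MonoidHom.snd A Q).comp f with hg
  -- Q is nilpotent as the image of the nilpotent group π
  have hQnil : Group.IsNilpotent Q := nilpotent_of_surjective g hsurj
  -- Q is nontrivial: otherwise ker g = ⊤ = Z(π) so π is abelian
  have hQnontriv : Nontrivial Q := by
    by_contra hQ
    rw [not_nontrivial_iff_subsingleton] at hQ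
    obtain ⟨a, b, hab⟩ := hπ
    apply hab
    have ha : a ∈ Subgroup.center π := by
      rw [← hker, MonoidHom.mem_ker]; exact Subsingleton.elim _ _
    exact (Subgroup.mem_center_iff.mp ha b).symm
  -- the center of Q is nontrivial
  have hZ : Subgroup.center Q ≠ ⊥ := center_ne_bot_of_nilpotent Q hQnil
  obtain ⟨q, hq, hq1⟩ : ∃ q ∈ Subgroup.center Q, q ≠ 1 := by
    by_contra h
    push_neg at h
    apply hZ
    rw [eq_bot_iff]
    intro x hx
    rw [Subgroup.mem_bot]
    exact h x hx
  obtain ⟨x, hx⟩ := hsurj q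
  -- x is not in the center of π
  have hxnc : x ∉ Subgroup.center π := by
    rw [← hker, MonoidHom.mem_ker, hx]
    exact hq1
  apply hxnc
  rw [Subgroup.mem_center_iff]
  intro y
  apply hinj
  rw [map_mul, map_mul]
  ext
  · exact mul_comm _ _
  · have : (f x).2 = q := hx
    simp only [Prod.snd_mul, this]
    exact (Subgroup.mem_center_iff.mp hq (f y).2)
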